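/- arXiv:2304.03985 — 3 statements merged into one kernel-verified Lean document; each statement's English description precedes it below -/
import Mathlib

section
/- For any two full binary trees T1 and T2 on n internal nodes each, of ranks r1 and r2 respectively, the rank-bounded rotation distance satisfies d_R(T1, T2) ≤ n²(1 + (2n+1)(r1 + r2 − 2)). -/
/-- Full binary trees: every node is a leaf or has exactly two children.
`node l r` is an internal node with left subtree `l` and right subtree `r`. -/
inductive FBT : Type
  | leaf : FBT
  | node : FBT → FBT → FBT
  deriving DecidableEq

namespace FBT

/-- Number of internal nodes. -/
def internal : FBT → ℕ
  | leaf => 0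
  | node l r => internal l + internal r + 1

/-- Height: maximum number of internal nodes on a root-to-leaf path. -/
def height : FBT → ℕ
  | leaf => 0
  | node l r => max (height l) (height r) + 1

/-- Rank of a full binary tree (Ehrenfeucht–Haussler rank). -/
def rank : FBT → ℕ
  | leaf => 0
  | node l r => if rank l = rank r then rank l + 1 else max (rank l) (rank r)

/-- A full binary tree is skew if every internal node has at least one leaf child. -/
def skew : FBT → Prop
  | leaf => True
  | node l r => (l = leaf ∨ r = leaf) ∧ skew l ∧ skew r

/-- Pre-order traversal of the internal nodes, labeled by the in-order labeling
(1-indexed); `off` is the number of in-order labels used strictly to the left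
of this subtree.  `T.preorderAux 0` is the tree permutation of `T`, as a list. -/
def preorderAux : FBT → ℕ → List ℕ
  | leaf, _ => []
  | node l r, off =>
      (off + internal l + 1) :: (preorderAux l off ++ preorderAux r (off + internal l + 1))

/-- Number of internal nodes on the rightmost root-to-leaf path. -/
def rightPath : FBT → ℕ
  | leaf => 0
  | node _ r => rightPath r + 1

end FBT

/-- One (left or right) rotation, performed at some node of the tree. -/
inductive Rot : FBT → FBT → Prop
  | rotR (C D E : FBT) : Rot (FBT.node (FBT.node C D) E) (FBT.node C (FBT.node D E))
  | rotL (C D E : FBT) : Rot (FBT.node C (FBT.node D E)) (FBT.node (FBT.node C D) E)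
  | congrL {l l' : FBT} (r : FBT) : Rot l l' → Rot (FBT.node l r) (FBT.node l' r)
  | congrR {r r' : FBT} (l : FBT) : Rot r r' → Rot (FBT.node l r) (FBT.node l r')

/-- `RotChainP P k T1 T2`: there is a sequence of `k` rotations transforming `T1`
into `T2` in which every tree reached along the way satisfies `P`. -/
def RotChainP (P : FBT → Prop) : ℕ → FBT → FBT → Prop
  | 0, T1, T2 => T1 = T2
  | k+1, T1, T2 => ∃ T, Rot T1 T ∧ P T ∧ RotChainP P k T T2

/-- `RotChain k T1 T2`: `T1` can be transformed into `T2` by `k` rotations. -/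
def RotChain : ℕ → FBT → FBT → Prop := RotChainP fun _ => True

/-- The rotation distance between two full binary trees. -/
noncomputable def rotDist (T1 T2 : FBT) : ℕ := sInf {k | RotChain k T1 T2}

/-- The right comb on `n` internal nodes. -/
def rightComb : ℕ → FBT
  | 0 => FBT.leaf
  | n+1 => FBT.node FBT.leaf (rightComb n)

/-- The left comb on `n` internal nodes. -/
def leftComb : ℕ → FBT
  | 0 => FBT.leaf
  | n+1 => FBT.node (leftComb n) FBT.leaf

/-- The complete binary tree of height `r`. -/
def completeTree : ℕ → FBT
  | 0 => FBT.leaf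
  | r+1 => FBT.node (completeTree r) (completeTree r)

/-- Replace the leftmost leaf of the first tree by the second tree. -/
def attachLeftmost : FBT → FBT → FBT
  | FBT.leaf, S => S
  | FBT.node l r, S => FBT.node (attachLeftmost l S) r

/-- The transposition `δ_{i,j,k}` (1-indexed, `1 ≤ i < j < k`) applied to a list:
the consecutive blocks occupying positions `i..j-1` and `j..k-1` are swapped,
all other positions are left fixed. -/
def transposeList (i j k : ℕ) (l : List ℕ) : List ℕ :=
  l.take (i-1) ++ (l.drop (j-1)).take (k-j) ++ (l.drop (i-1)).take (j-i) ++ l.drop (k-1)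

/-- `δ_{i,j,k}` is a tree transposition (on permutations of `n` elements): there are
full binary trees `T1, T2` with `n` internal nodes each, at rotation distance `1`,
whose tree permutations `σ, τ` satisfy `δ_{i,j,k}(σ) = τ`. -/
def IsTreeTransposition (n i j k : ℕ) : Prop :=
  ∃ T1 T2 : FBT, T1.internal = n ∧ T2.internal = n ∧ rotDist T1 T2 = 1 ∧
    transposeList i j k (T1.preorderAux 0) = T2.preorderAux 0

/-- `σ` (a permutation of `Fin n`) is a tree permutation: the pre-order traversal of
some full binary tree with `n` internal nodes under the in-order labeling.
(Positions and values are converted to 1-indexed labels.) -/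
def IsTreePerm (n : ℕ) (σ : Equiv.Perm (Fin n)) : Prop :=
  ∃ T : FBT, T.internal = n ∧ T.preorderAux 0 = List.ofFn fun i => (σ i : ℕ) + 1

/-- `σ` is a skew permutation: the tree permutation of some full skew tree. -/
def IsSkewPerm (n : ℕ) (σ : Equiv.Perm (Fin n)) : Prop :=
  ∃ T : FBT, T.internal = n ∧ T.skew ∧ T.preorderAux 0 = List.ofFn fun i => (σ i : ℕ) + 1

/-- `SkewSim σ τ` (written `σ ∼ τ` in the paper): `τ` is obtained from `σ` (lists,
0-indexed) by a skew transposition: for some position `i`, `σ(i)` and `σ(i+1)` are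
respectively the min and the max (or the max and the min) of the suffix starting at
position `i`, and `τ` is `σ` with the entries at positions `i` and `i+1` swapped. -/
def SkewSim (σ τ : List ℕ) : Prop :=
  ∃ i : ℕ, i + 1 < σ.length ∧
    (((∀ x ∈ σ.drop i, σ.getD i 0 ≤ x) ∧ (∀ x ∈ σ.drop i, x ≤ σ.getD (i+1) 0)) ∨
     ((∀ x ∈ σ.drop i, x ≤ σ.getD i 0) ∧ (∀ x ∈ σ.drop i, σ.getD (i+1) 0 ≤ x))) ∧
    τ = σ.take i ++ [σ.getD (i+1) 0, σ.getD i 0] ++ σ.drop (i+2)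

/-- The tree polynomial of a full binary tree: the sum over all leaves of `x^a y^b`,
where `a` (resp. `b`) is the number of left (resp. right) edges on the root-to-leaf
path.  `X 0` plays the role of `x` and `X 1` the role of `y`. -/
noncomputable def treePoly : FBT → MvPolynomial (Fin 2) ℕ
  | FBT.leaf => 1
  | FBT.node l r => MvPolynomial.X 0 * treePoly l + MvPolynomial.X 1 * treePoly r

open FBT

-- basic chain lemmas
lemma rot_symm {a b : FBT} (h : Rot a b) : Rot b a := by
  induction h with
  | rotR C D E => exact Rot.rotL C D E
  | rotL C D E => exact Rot.rotR C D E
  | congrL r _ ih => exact Rot.congrL r ih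
  | congrR l _ ih => exact Rot.congrR l ih

lemma chain_trans {P : FBT → Prop} : ∀ (k : ℕ) {m a b c}, RotChainP P k a b →
    RotChainP P m b c → RotChainP P (k+m) a c := by
  intro k
  induction k with
  | zero => intro m a b c h1 h2; rw [show 0+m = m by omega]; exact h1 ▸ h2
  | succ k ih =>
      intro m a b c h1 h2
      obtain ⟨t, hR, hP, hrest⟩ := h1
      rw [show k+1+m = (k+m)+1 by omega]
      exact ⟨t, hR, hP, ih hrest h2⟩

lemma chain_snoc {P : FBT → Prop} : ∀ (k : ℕ) {a b c}, RotChainP P k a b →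
    Rot b c → P c → RotChainP P (k+1) a c := by
  intro k
  induction k with
  | zero => intro a b c h1 h2 h3; exact ⟨c, h1 ▸ h2, h3, rfl⟩
  | succ k ih =>
      intro a b c h1 h2 h3
      obtain ⟨t, hR, hP, hrest⟩ := h1
      exact ⟨t, hR, hP, ih hrest h2 h3⟩

lemma chain_symm {P : FBT → Prop} : ∀ (k : ℕ) {a b}, RotChainP P k a b →
    P a → RotChainP P k b a := by
  intro k
  induction k with
  | zero => intro a b h _; exact h.symm
  | succ k ih =>
      intro a b h hPa
      obtain ⟨t, hR, hP, hrest⟩ := h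
      exact chain_snoc k (ih hrest hP) (rot_symm hR) hPa

lemma chain_mono {P Q : FBT → Prop} (hPQ : ∀ x, P x → Q x) :
    ∀ (k : ℕ) {a b}, RotChainP P k a b → RotChainP Q k a b := by
  intro k
  induction k with
  | zero => intro a b h; exact h
  | succ k ih =>
      intro a b h
      obtain ⟨t, hR, hP, hrest⟩ := h
      exact ⟨t, hR, hPQ t hP, ih hrest⟩

lemma chain_congrR {P Q : FBT → Prop} (l : FBT)
    (hPQ : ∀ x, P x → Q (FBT.node l x)) :
    ∀ (k : ℕ) {r r'}, RotChainP P k r r' → RotChainP Q k (FBT.node l r) (FBT.node l r') := by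
  intro k
  induction k with
  | zero => intro r r' h; exact h ▸ rfl
  | succ k ih =>
      intro r r' h
      obtain ⟨t, hR, hP, hrest⟩ := h
      exact ⟨FBT.node l t, Rot.congrR l hR, hPQ t hP, ih hrest⟩

lemma chain_congrL {P Q : FBT → Prop} (r : FBT)
    (hPQ : ∀ x, P x → Q (FBT.node x r)) :
    ∀ (k : ℕ) {l l'}, RotChainP P k l l' → RotChainP Q k (FBT.node l r) (FBT.node l' r) := by
  intro k
  induction k with
  | zero => intro l l' h; exact h ▸ rfl
  | succ k ih =>
      intro l l' h
      obtain ⟨t, hR, hP, hrest⟩ := h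
      exact ⟨FBT.node t r, Rot.congrL r hR, hPQ t hP, ih hrest⟩

-- rank lemmas
lemma rank_node (l r : FBT) :
    (FBT.node l r).rank = if l.rank = r.rank then l.rank + 1 else max l.rank r.rank := rfl

lemma rankF_le {a b c : ℕ} :
    (if a = b then a+1 else max a b) ≤ c ↔ a ≤ c ∧ b ≤ c ∧ (a = b → a < c) := by
  split <;> omega

lemma rankF_ge {a b : ℕ} : max a b ≤ (if a = b then a+1 else max a b) := by
  split <;> omega

lemma internal_rightComb (k : ℕ) : (rightComb k).internal = k := by
  induction k with
  | zero => rfl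
  | succ k ih => simp [rightComb, internal, ih]

lemma rank_rightComb_le (k : ℕ) : (rightComb k).rank ≤ 1 := by
  induction k with
  | zero => simp [rightComb, rank]
  | succ k ih =>
      have : (rightComb (k+1)).rank =
        if (0:ℕ) = (rightComb k).rank then 0 + 1 else max 0 (rightComb k).rank := by
        simp [rightComb, rank_node, rank]
      rw [this]; split <;> omega

lemma skew_rightComb (k : ℕ) : (rightComb k).skew := by
  induction k with
  | zero => trivial
  | succ k ih => exact ⟨Or.inl rfl, trivial, ih⟩

lemma fbtRank_eq_zero_iff {T : FBT} : T.rank = 0 ↔ T = FBT.leaf := by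
  cases T with
  | leaf => simp [rank]
  | node l r =>
      constructor
      · intro h; rw [rank_node] at h; exfalso; split at h <;> omega
      · intro h; exact absurd h (by simp)

lemma rank_le_one_of_skew : ∀ T : FBT, T.skew → T.rank ≤ 1 := by
  intro T
  induction T with
  | leaf => intro _; simp [rank]
  | node l r ihl ihr =>
      rintro ⟨hleaf, hl, hr⟩
      have h1 := ihl hl
      have h2 := ihr hr
      have h0 : l.rank = 0 ∨ r.rank = 0 := by
        rcases hleaf with h | h <;> subst h
        · left; rfl
        · right; rfl
      rw [rank_node]; split <;> omega

lemma skew_of_rank_le_one : ∀ T : FBT, T.rank ≤ 1 → T.skew := by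
  intro T
  induction T with
  | leaf => intro _; trivial
  | node l r ihl ihr =>
      intro h
      rw [rank_node] at h
      have hl1 : l.rank ≤ 1 := by split at h <;> omega
      have hr1 : r.rank ≤ 1 := by split at h <;> omega
      have h0 : l.rank = 0 ∨ r.rank = 0 := by
        by_contra hc
        push_neg at hc
        have : l.rank = 1 ∧ r.rank = 1 := ⟨by omega, by omega⟩
        rw [this.1, this.2] at h; simp at h
      refine ⟨?_, ihl hl1, ihr hr1⟩
      rcases h0 with h0 | h0
      · exact Or.inl (fbtRank_eq_zero_iff.mp h0)
      · exact Or.inr (fbtRank_eq_zero_iff.mp h0)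

-- merging two right combs, keeping rank ≤ 2
lemma combMerge : ∀ a b : ℕ, RotChainP (fun S => S.rank ≤ 2) a
    (FBT.node (rightComb a) (rightComb b)) (rightComb (a+b+1)) := by
  intro a
  induction a with
  | zero =>
      intro b
      show FBT.node FBT.leaf (rightComb b) = rightComb (0+b+1)
      rw [show 0+b+1 = b+1 by omega]; rfl
  | succ a ih =>
      intro b
      refine ⟨FBT.node FBT.leaf (FBT.node (rightComb a) (rightComb b)), ?_, ?_, ?_⟩
      · exact Rot.rotR FBT.leaf (rightComb a) (rightComb b)
      · have h1 : (FBT.node (rightComb a) (rightComb b)).rank ≤ 2 := by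
          rw [rank_node, rankF_le]
          have := rank_rightComb_le a
          have := rank_rightComb_le b
          omega
        show (FBT.node FBT.leaf (FBT.node (rightComb a) (rightComb b))).rank ≤ 2
        have h0 : FBT.leaf.rank = 0 := rfl
        rw [rank_node, rankF_le, h0]
        omega
      · have lift := chain_congrR (P := fun S => S.rank ≤ 2) (Q := fun S => S.rank ≤ 2)
          FBT.leaf (fun x hx => by
            show (FBT.node FBT.leaf x).rank ≤ 2
            have h0 : FBT.leaf.rank = 0 := rfl
            rw [rank_node, rankF_le, h0]
            omega) a (ih b)
        have : FBT.node FBT.leaf (rightComb (a+b+1)) = rightComb (a+1+b+1) := by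
          rw [show a+1+b+1 = (a+b+1)+1 by omega]; rfl
        exact this ▸ lift

-- node (rightComb m) leaf → rightComb (m+1), through skew trees
lemma combSnocLeaf : ∀ m : ℕ, RotChainP FBT.skew m
    (FBT.node (rightComb m) FBT.leaf) (rightComb (m+1)) := by
  intro m
  induction m with
  | zero => show FBT.node FBT.leaf FBT.leaf = rightComb 1; rfl
  | succ m ih =>
      refine ⟨FBT.node FBT.leaf (FBT.node (rightComb m) FBT.leaf), ?_, ?_, ?_⟩
      · exact Rot.rotR FBT.leaf (rightComb m) FBT.leaf
      · exact ⟨Or.inl rfl, trivial, Or.inr rfl, skew_rightComb m, trivial⟩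
      · have lift := chain_congrR (P := FBT.skew) (Q := FBT.skew)
          FBT.leaf (fun x hx => ⟨Or.inl rfl, trivial, hx⟩) m ih
        exact lift

-- skew trees to the comb, through skew trees
lemma skew_to_comb : ∀ T : FBT, T.skew →
    ∃ k ≤ T.internal * (T.internal - 1) / 2, RotChainP FBT.skew k T (rightComb T.internal) := by
  intro T
  induction T with
  | leaf => intro _; exact ⟨0, Nat.zero_le _, rfl⟩
  | node l r ihl ihr =>
      rintro ⟨hleaf, hl, hr⟩
      rcases hleaf with hL | hR
      · -- l = leaf
        subst hL
        obtain ⟨k, hk, hchain⟩ := ihr hr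
        refine ⟨k, ?_, ?_⟩
        · have h1 : (FBT.node FBT.leaf r).internal = r.internal + 1 := by simp [internal]
          rw [h1]
          calc k ≤ r.internal * (r.internal - 1) / 2 := hk
            _ ≤ (r.internal + 1) * (r.internal + 1 - 1) / 2 := by
                apply Nat.div_le_div_right
                apply Nat.mul_le_mul <;> omega
        · have lift := chain_congrR (P := FBT.skew) (Q := FBT.skew)
            FBT.leaf (fun x hx => ⟨Or.inl rfl, trivial, hx⟩) k hchain
          have h2 : FBT.node FBT.leaf (rightComb r.internal)
              = rightComb ((FBT.node FBT.leaf r).internal) := by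
            simp [internal]; rfl
          exact h2 ▸ lift
      · -- r = leaf
        subst hR
        obtain ⟨k, hk, hchain⟩ := ihl hl
        set a := l.internal with ha
        have lift1 := chain_congrL (P := FBT.skew) (Q := FBT.skew)
          FBT.leaf (fun x hx => ⟨Or.inr rfl, hx, trivial⟩) k hchain
        have lift2 := combSnocLeaf a
        have total := chain_trans k lift1 lift2
        refine ⟨k + a, ?_, ?_⟩
        · have h1 : (FBT.node l FBT.leaf).internal = a + 1 := by simp [internal]; rfl
          rw [h1]
          have he : (a+1) * (a+1-1) = a * (a-1) + 2*a := by cases a with | zero => rfl | succ m => simp [Nat.succ_sub_one]; ring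
          omega
        · have h2 : rightComb (a+1) = rightComb ((FBT.node l FBT.leaf).internal) := by
            simp [internal]; rfl
          exact h2 ▸ total

lemma internal_eq_zero {T : FBT} (h : T.internal = 0) : T = FBT.leaf := by
  cases T with
  | leaf => rfl
  | node l r => simp [internal] at h

-- flatten any tree to the right comb with ranks bounded by max rank 1
lemma flatten : ∀ T : FBT, ∃ k ≤ T.internal ^ 2,
    RotChainP (fun S => S.rank ≤ max T.rank 1) k T (rightComb T.internal) := by
  intro T
  induction T with
  | leaf => exact ⟨0, Nat.zero_le _, rfl⟩
  | node L R ihL ihR =>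
    by_cases hrk : (FBT.node L R).rank ≤ 1
    · -- skew case
      obtain ⟨k, hk, hchain⟩ := skew_to_comb _ (skew_of_rank_le_one _ hrk)
      refine ⟨k, ?_, chain_mono (fun x hx =>
        le_trans (rank_le_one_of_skew x hx) (le_max_right _ _)) k hchain⟩
      set n := (FBT.node L R).internal with hn
      calc k ≤ n * (n - 1) / 2 := hk
        _ ≤ n * (n-1) := Nat.div_le_self _ _
        _ ≤ n * n := Nat.mul_le_mul_left n (Nat.sub_le n 1)
        _ = n ^ 2 := (pow_two n).symm
    · push_neg at hrk
      have hr2 : 2 ≤ (FBT.node L R).rank := hrk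
      set r := (FBT.node L R).rank with hrdef
      have hh : r = if L.rank = R.rank then L.rank + 1 else max L.rank R.rank := rank_node L R
      obtain ⟨kR, hkR, chR⟩ := ihR
      obtain ⟨kL, hkL, chL⟩ := ihL
      set a := L.internal with ha
      set b := R.internal with hb
      have seg1 : RotChainP (fun S => S.rank ≤ r) kR
          (FBT.node L R) (FBT.node L (rightComb b)) := by
        refine chain_congrR L ?_ kR chR
        intro x hx
        rw [rank_node, rankF_le]
        split at hh <;> omega
      have seg2 : RotChainP (fun S => S.rank ≤ r) kL
          (FBT.node L (rightComb b)) (FBT.node (rightComb a) (rightComb b)) := by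
        refine chain_congrL (rightComb b) ?_ kL chL
        intro x hx
        rw [rank_node, rankF_le]
        have hcb := rank_rightComb_le b
        split at hh <;> omega
      have seg3 : RotChainP (fun S => S.rank ≤ r) a
          (FBT.node (rightComb a) (rightComb b)) (rightComb (a+b+1)) :=
        chain_mono (fun x hx => le_trans hx hr2) a (combMerge a b)
      have total := chain_trans kR seg1 (chain_trans kL seg2 seg3)
      have hin : (FBT.node L R).internal = a + b + 1 := by simp [internal]; rfl
      refine ⟨kR + (kL + a), ?_, ?_⟩
      · rw [hin]
        have h2 : (a+b+1)^2 = a*a + b*b + a + (2*(a*b) + a + 2*b + 1) := by ring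
        rw [pow_two] at hkR hkL
        omega
      · rw [hin]
        have hmax : max r 1 = r := by omega
        rw [hmax]
        exact total


/-- for full binary trees `T1`, `T2` on `n` internal nodes each, of ranks
`r1` and `r2`, the rank-bounded rotation distance satisfies
`d_R(T1,T2) ≤ n²(1 + (2n+1)(r1+r2-2))`. -/
theorem rank_bounded_rotation_distance_bound (n r1 r2 : ℕ) (T1 T2 : FBT)
    (h1 : T1.internal = n) (h2 : T2.internal = n)
    (hr1 : T1.rank = r1) (hr2 : T2.rank = r2) :
    ∃ k ≤ n ^ 2 * (1 + (2 * n + 1) * (r1 + r2 - 2)),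
      RotChainP (fun S => S.rank ≤ max r1 r2) k T1 T2 := by
  subst h1 hr1 hr2
  by_cases hn : T1.internal = 0
  · have e1 : T1 = FBT.leaf := internal_eq_zero hn
    have e2 : T2 = FBT.leaf := internal_eq_zero (by omega)
    exact ⟨0, Nat.zero_le _, show T1 = T2 by rw [e1, e2]⟩
  · have hT1 : T1 ≠ FBT.leaf := fun h => hn (by rw [h]; rfl)
    have hT2 : T2 ≠ FBT.leaf := fun h => hn (by rw [← h2, h]; rfl)
    have hrk1 : 1 ≤ T1.rank := by
      rcases Nat.eq_zero_or_pos T1.rank with h | h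
      · exact absurd (fbtRank_eq_zero_iff.mp h) hT1
      · exact h
    have hrk2 : 1 ≤ T2.rank := by
      rcases Nat.eq_zero_or_pos T2.rank with h | h
      · exact absurd (fbtRank_eq_zero_iff.mp h) hT2
      · exact h
    by_cases hmx : max T1.rank T2.rank ≤ 1
    · -- both skew
      have e1 : T1.rank = 1 := by omega
      have e2 : T2.rank = 1 := by omega
      obtain ⟨k1, hk1, c1⟩ := skew_to_comb T1 (skew_of_rank_le_one T1 (by omega))
      obtain ⟨k2, hk2, c2⟩ := skew_to_comb T2 (skew_of_rank_le_one T2 (by omega))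
      rw [h2] at c2 hk2
      have rev := chain_symm k2 c2 (skew_of_rank_le_one T2 (by omega))
      have total := chain_trans k1 c1 rev
      refine ⟨k1 + k2, ?_, ?_⟩
      · rw [e1, e2]
        norm_num
        rw [pow_two]
        have hmul : T1.internal * (T1.internal - 1) ≤ T1.internal * T1.internal :=
          Nat.mul_le_mul_left _ (Nat.sub_le _ _)
        omega
      · exact chain_mono (fun x hx =>
          le_trans (rank_le_one_of_skew x hx) (by omega)) _ total
    · -- max rank ≥ 2
      push_neg at hmx
      obtain ⟨k1, hk1, c1⟩ := flatten T1
      obtain ⟨k2, hk2, c2⟩ := flatten T2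
      rw [h2] at c2 hk2
      have rev := chain_symm k2 c2 (le_max_left _ _)
      have c1' := chain_mono (P := fun S => S.rank ≤ max T1.rank 1)
        (Q := fun S => S.rank ≤ max T1.rank T2.rank) (fun x hx => by omega) k1 c1
      have rev' := chain_mono (P := fun S => S.rank ≤ max T2.rank 1)
        (Q := fun S => S.rank ≤ max T1.rank T2.rank) (fun x hx => by omega) k2 rev
      have total := chain_trans k1 c1' rev'
      refine ⟨k1 + k2, ?_, total⟩
      have hs : 1 ≤ T1.rank + T2.rank - 2 := by omega
      have hp : 2 ≤ 1 + (2 * T1.internal + 1) * (T1.rank + T2.rank - 2) := by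
        have := Nat.mul_le_mul (show 1 ≤ 2 * T1.internal + 1 by omega) hs
        omega
      have hfin : T1.internal ^ 2 * 2 ≤
          T1.internal ^ 2 * (1 + (2 * T1.internal + 1) * (T1.rank + T2.rank - 2)) :=
        Nat.mul_le_mul_left _ hp
      omega
end

section
/- For every n ≥ 1, the right comb and the left comb on n internal nodes each are full skew trees whose skew rotation distance is at least n(n−1)/2. -/
namespace FBT
def phi : FBT → ℕ
  | leaf => 0
  | node l r => phi l + phi r + internal l
end FBT

lemma rot_internal {T T' : FBT} (h : Rot T T') : T'.internal = T.internal := by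
  induction h with
  | rotR C D E => simp [FBT.internal]; omega
  | rotL C D E => simp [FBT.internal]; omega
  | congrL r _ ih => simp [FBT.internal, ih]
  | congrR l _ ih => simp [FBT.internal, ih]

lemma rot_phi {T T' : FBT} (h : Rot T T') (hs : T.skew) (hs' : T'.skew) :
    T'.phi ≤ T.phi + 1 := by
  induction h with
  | rotR C D E => simp [FBT.phi, FBT.internal]; omega
  | rotL C D E =>
      obtain ⟨hC, -, -⟩ := hs
      have : C = FBT.leaf := by
        rcases hC with h | h
        · exact h
        · exact absurd h (by simp)
      subst this
      simp [FBT.phi, FBT.internal]; omega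
  | congrL r hr ih =>
      have := ih hs.2.1 hs'.2.1
      simp [FBT.phi, rot_internal hr]
      omega
  | congrR l hr ih =>
      have := ih hs.2.2 hs'.2.2
      simp [FBT.phi]
      omega

lemma chain_phi : ∀ k (T1 T2 : FBT), T1.skew → RotChainP FBT.skew k T1 T2 →
    T2.phi ≤ T1.phi + k := by
  intro k
  induction k with
  | zero => intro T1 T2 _ h; cases h; simp
  | succ k ih =>
      rintro T1 T2 hs ⟨T, hrot, hT, hchain⟩
      have h1 := rot_phi hrot hs hT
      have h2 := ih T T2 hT hchain
      omega

lemma rightComb_skew : ∀ n, (rightComb n).skew := by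
  intro n; induction n with
  | zero => trivial
  | succ n ih => exact ⟨Or.inl rfl, trivial, ih⟩

lemma leftComb_skew : ∀ n, (leftComb n).skew := by
  intro n; induction n with
  | zero => trivial
  | succ n ih => exact ⟨Or.inr rfl, ih, trivial⟩

lemma rightComb_phi : ∀ n, (rightComb n).phi = 0 := by
  intro n; induction n with
  | zero => rfl
  | succ n ih => simp [rightComb, FBT.phi, FBT.internal, ih]

lemma leftComb_internal : ∀ n, (leftComb n).internal = n := by
  intro n; induction n with
  | zero => rfl
  | succ n ih => simp [leftComb, FBT.internal, ih]

lemma leftComb_phi : ∀ n, (leftComb n).phi * 2 = n * (n - 1) := by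
  intro n; induction n with
  | zero => rfl
  | succ n ih =>
      simp only [leftComb, FBT.phi, leftComb_internal]
      cases n with
      | zero => simpa using ih
      | succ m =>
        simp [FBT.phi] at ih ⊢
        ring_nf
        ring_nf at ih
        omega

/-- for every `n ≥ 1`, the right comb and the left comb on `n` internal
nodes are full skew trees whose skew rotation distance is at least `n(n-1)/2`. -/
theorem combs_skew_rotation_distance_lower_bound (n : ℕ) (hn : 1 ≤ n) :
    (rightComb n).skew ∧ (leftComb n).skew ∧
    ∀ k : ℕ, RotChainP FBT.skew k (rightComb n) (leftComb n) → n * (n - 1) / 2 ≤ k := by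
  refine ⟨rightComb_skew n, leftComb_skew n, fun k hchain => ?_⟩
  have h := chain_phi k _ _ (rightComb_skew n) hchain
  rw [rightComb_phi] at h
  have h2 := leftComb_phi n
  omega
end

section
/- For every n ≥ 4, there exist two distinct full binary trees T1 and T2, each with n internal nodes, such that their tree polynomials are identical: p_{T1}(x,y) = p_{T2}(x,y). -/
/-- for every `n ≥ 4` there are two distinct full binary trees with `n`
internal nodes having identical tree polynomials. -/
theorem tree_polynomial_not_injective (n : ℕ) (hn : 4 ≤ n) :
    ∃ T1 T2 : FBT, T1 ≠ T2 ∧ T1.internal = n ∧ T2.internal = n ∧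
      treePoly T1 = treePoly T2 := by
  induction n, hn using Nat.le_induction with
  | base =>
    refine ⟨FBT.node (FBT.node FBT.leaf FBT.leaf)
        (FBT.node (FBT.node FBT.leaf FBT.leaf) FBT.leaf),
      FBT.node (FBT.node FBT.leaf (FBT.node FBT.leaf FBT.leaf))
        (FBT.node FBT.leaf FBT.leaf), by decide, by decide, by decide, ?_⟩
    simp only [treePoly]
    ring
  | succ n hn ih =>
    obtain ⟨T1, T2, hne, h1, h2, hp⟩ := ih
    exact ⟨FBT.node FBT.leaf T1, FBT.node FBT.leaf T2,
      by simpa using hne, by simp [FBT.internal, h1], by simp [FBT.internal, h2],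
      by simp only [treePoly, hp]⟩
end
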